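/- Tur\u00e1n-type consequence for interval graphs: let 0 < β ≤ 1 and let G be the intersection graph of n intervals on a line. If G has more than β(2−β)·C(n,2) + o(n²) edges, then some point of the line is contained in more than βn intervals. (Precisely: for integers M ≤ n, if the number of intersecting pairs exceeds (1/2)((M−1) + 2(M−1)n − (M−1)² − 2n) then some point lies in at least M intervals.) -/

import Mathlib

open scoped Classical
open Finset

theorem interval_turan {n : ℕ} (a b : Fin n → ℝ) (hab : ∀ i, a i ≤ b i)
    (M : ℕ) (hMn : M ≤ n) (e : ℕ)
    (he : e = (Finset.univ.filter fun q : Fin n × Fin n =>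
      q.1 < q.2 ∧ (Set.Icc (a q.1) (b q.1) ∩ Set.Icc (a q.2) (b q.2)).Nonempty).card)
    (hgt : (2*e : ℤ) > ((M:ℤ)-1) + 2*((M:ℤ)-1)*n - ((M:ℤ)-1)^2 - 2*n) :
    ∃ p : ℝ, M ≤ (Finset.univ.filter fun i => p ∈ Set.Icc (a i) (b i)).card := by
  rcases Nat.lt_or_ge M 2 with hM | hM2
  · interval_cases M
    · exact ⟨0, Nat.zero_le _⟩
    · have hn : 0 < n := hMn
      refine ⟨a ⟨0, hn⟩, ?_⟩
      have hmem : (⟨0, hn⟩ : Fin n) ∈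
          Finset.univ.filter fun i => a ⟨0, hn⟩ ∈ Set.Icc (a i) (b i) := by
        simp [Set.mem_Icc, hab _]
      exact Finset.card_pos.mpr ⟨_, hmem⟩
  by_contra hcon
  push_neg at hcon
  -- hcon : ∀ p, card < M
  set prec : Fin n → Fin n → Prop := fun i j => a i < a j ∨ (a i = a j ∧ i < j) with hprec
  set inter : Fin n → Fin n → Prop :=
    fun i j => (Set.Icc (a i) (b i) ∩ Set.Icc (a j) (b j)).Nonempty with hinter
  have hirr : ∀ i, ¬ prec i i := by
    intro i h
    rcases h with h | ⟨_, h⟩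
    · exact lt_irrefl _ h
    · exact lt_irrefl _ h
  have hasymm : ∀ i j, prec i j → ¬ prec j i := by
    intro i j hij hji
    rcases hij with h | ⟨h, h'⟩ <;> rcases hji with g | ⟨g, g'⟩
    · exact lt_irrefl _ (h.trans g)
    · exact lt_irrefl _ (h.trans_eq g)
    · exact lt_irrefl _ (g.trans_eq h)
    · exact lt_irrefl _ (h'.trans g')
  have htot : ∀ i j : Fin n, i ≠ j → prec i j ∨ prec j i := by
    intro i j hij
    rcases lt_trichotomy (a i) (a j) with h | h | h
    · exact Or.inl (Or.inl h)
    · rcases lt_or_gt_of_ne hij with g | g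
      · exact Or.inl (Or.inr ⟨h, g⟩)
      · exact Or.inr (Or.inr ⟨h.symm, g⟩)
    · exact Or.inr (Or.inl h)
  have htrans : ∀ i j k, prec i j → prec j k → prec i k := by
    intro i j k hij hjk
    rcases hij with h | ⟨h, h'⟩ <;> rcases hjk with g | ⟨g, g'⟩
    · exact Or.inl (h.trans g)
    · exact Or.inl (g ▸ h)
    · exact Or.inl (h ▸ g)
    · exact Or.inr ⟨h.trans g, h'.trans g'⟩
  have hintsymm : ∀ i j, inter i j → inter j i := by
    intro i j ⟨x, hx1, hx2⟩
    exact ⟨x, hx2, hx1⟩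
  -- the two edge sets have equal cardinality
  have hA : e = (Finset.univ.filter fun q : Fin n × Fin n =>
      prec q.1 q.2 ∧ inter q.1 q.2).card := by
    rw [he]
    refine Finset.card_nbij' (fun q => if prec q.1 q.2 then q else q.swap)
      (fun q => if q.1 < q.2 then q else q.swap) ?_ ?_ ?_ ?_
    · intro q hq
      change _ ∈ (_ : Finset _) at hq ⊢
      simp only [Finset.mem_filter, Finset.mem_univ, true_and] at hq ⊢
      rcases htot q.1 q.2 (ne_of_lt hq.1) with h | h
      · simp only [if_pos h]
        exact ⟨h, hq.2⟩
      · have : ¬ prec q.1 q.2 := hasymm _ _ h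
        simp only [if_neg this]
        exact ⟨h, hintsymm _ _ hq.2⟩
    · intro q hq
      change _ ∈ (_ : Finset _) at hq ⊢
      simp only [Finset.mem_filter, Finset.mem_univ, true_and] at hq ⊢
      have hne : q.1 ≠ q.2 := by
        intro h; exact hirr q.1 (h ▸ hq.1)
      rcases lt_or_gt_of_ne hne with h | h
      · simp only [if_pos h]
        exact ⟨h, hq.2⟩
      · simp only [if_neg (not_lt.mpr h.le)]
        exact ⟨h, hintsymm _ _ hq.2⟩
    · intro q hq
      change _ ∈ (_ : Finset _) at hq
      simp only [Finset.mem_filter, Finset.mem_univ, true_and] at hq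
      by_cases h : prec q.1 q.2
      · simp [if_pos h, if_pos hq.1]
      · rcases htot q.1 q.2 (ne_of_lt hq.1) with g | g
        · exact absurd g h
        · simp [if_neg h, if_neg (not_lt.mpr hq.1.le)]
    · intro q hq
      change _ ∈ (_ : Finset _) at hq
      simp only [Finset.mem_filter, Finset.mem_univ, true_and] at hq
      by_cases h : q.1 < q.2
      · simp [if_pos h, if_pos hq.1]
      · simp only [if_neg h]
        have hne : q.1 ≠ q.2 := by
          intro g; exact hirr q.1 (g ▸ hq.1)
        have h2 : q.2 < q.1 := lt_of_le_of_ne (not_lt.mp h) hne.symm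
        have : ¬ prec q.2 q.1 := hasymm _ _ hq.1
        simp [if_neg this]
  -- fiberwise decomposition
  have hB : (Finset.univ.filter fun q : Fin n × Fin n =>
      prec q.1 q.2 ∧ inter q.1 q.2).card
      = ∑ i : Fin n, (Finset.univ.filter fun j => prec j i ∧ inter j i).card := by
    rw [Finset.card_eq_sum_card_fiberwise
      (f := Prod.snd) (t := Finset.univ) (fun x _ => Finset.mem_univ _)]
    refine Finset.sum_congr rfl fun i _ => ?_
    refine Finset.card_nbij' (fun q => q.1) (fun j => (j, i)) ?_ ?_ ?_ ?_
    · intro q hq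
      change _ ∈ (_ : Finset _) at hq ⊢
      simp only [Finset.mem_filter, Finset.mem_univ, true_and] at hq ⊢
      rcases hq with ⟨⟨h1, h2⟩, h3⟩
      exact ⟨h3 ▸ h1, h3 ▸ h2⟩
    · intro j hj
      change _ ∈ (_ : Finset _) at hj ⊢
      simp only [Finset.mem_filter, Finset.mem_univ, true_and] at hj
      simp [hj.1, hj.2]
    · intro q hq
      change _ ∈ (_ : Finset _) at hq
      simp only [Finset.mem_filter, Finset.mem_univ, true_and] at hq
      exact Prod.ext rfl hq.2.symm
    · intro j _
      rfl
  set c : Fin n → ℕ := fun i => (Finset.univ.filter fun j => prec j i ∧ inter j i).card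
    with hc
  set rk : Fin n → ℕ := fun i => (Finset.univ.filter fun j => prec j i).card with hrk
  set d : ℕ := M - 2 with hd
  -- depth bound: c i ≤ d
  have hCd : ∀ i, c i ≤ d := by
    intro i
    have hsub : insert i (Finset.univ.filter fun j => prec j i ∧ inter j i)
        ⊆ Finset.univ.filter fun j => a i ∈ Set.Icc (a j) (b j) := by
      intro j hj
      rcases Finset.mem_insert.mp hj with rfl | hj
      · simp [Set.mem_Icc, hab j]
      · simp only [Finset.mem_filter, Finset.mem_univ, true_and] at hj ⊢
        rcases hj with ⟨hp, x, hx1, hx2⟩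
        have h1 : a j ≤ a i := by
          rcases hp with h | ⟨h, _⟩
          · exact h.le
          · exact h.le
        have h2 : a i ≤ b j := le_trans hx2.1 hx1.2
        exact ⟨h1, h2⟩
    have hnotmem : i ∉ (Finset.univ.filter fun j => prec j i ∧ inter j i) := by
      simp only [Finset.mem_filter, Finset.mem_univ, true_and]
      intro h
      exact hirr i h.1
    have := Finset.card_le_card hsub
    rw [Finset.card_insert_of_notMem hnotmem] at this
    have hlt := hcon (a i)
    have hq : (Finset.univ.filter fun j => prec j i ∧ inter j i).card = c i := rfl
    omega
  -- rank bound: c i ≤ rk i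
  have hCr : ∀ i, c i ≤ rk i := by
    intro i
    apply Finset.card_le_card
    intro j hj
    simp only [Finset.mem_filter, Finset.mem_univ, true_and] at hj ⊢
    exact hj.1
  -- rk i < n
  have hrkn : ∀ i, rk i < n := by
    intro i
    have : (Finset.univ.filter fun j => prec j i) ⊂ Finset.univ := by
      refine Finset.ssubset_univ_iff.mpr ?_
      intro h
      have hi : i ∈ Finset.univ.filter fun j => prec j i := by
        rw [h]; exact Finset.mem_univ i
      simp only [Finset.mem_filter] at hi
      exact hirr i hi.2
    have := Finset.card_lt_card this
    simpa using this
  -- rank strictly monotone wrt prec, hence injective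
  have hrkmono : ∀ i j, prec i j → rk i < rk j := by
    intro i j hij
    have hsub : insert i (Finset.univ.filter fun l => prec l i)
        ⊆ Finset.univ.filter fun l => prec l j := by
      intro l hl
      rcases Finset.mem_insert.mp hl with rfl | hl
      · simp only [Finset.mem_filter, Finset.mem_univ, true_and]
        exact hij
      · simp only [Finset.mem_filter, Finset.mem_univ, true_and] at hl ⊢
        exact htrans _ _ _ hl hij
    have hnotmem : i ∉ (Finset.univ.filter fun l => prec l i) := by
      simp only [Finset.mem_filter, Finset.mem_univ, true_and]
      exact hirr i
    have := Finset.card_le_card hsub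
    rw [Finset.card_insert_of_notMem hnotmem] at this
    have e1 : (Finset.univ.filter fun l => prec l i).card = rk i := rfl
    have e2 : (Finset.univ.filter fun l => prec l j).card = rk j := rfl
    omega
  have hrkinj : Function.Injective (fun i => (⟨rk i, hrkn i⟩ : Fin n)) := by
    intro i j h
    simp only [Fin.mk.injEq] at h
    by_contra hne
    rcases htot i j hne with g | g
    · exact absurd h (Nat.ne_of_lt (hrkmono _ _ g))
    · exact absurd h.symm (Nat.ne_of_lt (hrkmono _ _ g))
  have hrkbij : Function.Bijective (fun i => (⟨rk i, hrkn i⟩ : Fin n)) :=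
    (Finite.injective_iff_bijective).mp hrkinj
  -- main count
  have hsum1 : e ≤ ∑ i : Fin n, min (rk i) d := by
    rw [hA, hB]
    exact Finset.sum_le_sum fun i _ => le_min (hCr i) (hCd i)
  have hsum2 : ∑ i : Fin n, min (rk i) d = ∑ r ∈ Finset.range n, min r d := by
    rw [Finset.sum_range fun r => min r d]
    exact (Fintype.sum_bijective _ hrkbij _ _ fun i => rfl)
  have hdn : d ≤ n := by omega
  have hsum3 : 2 * ∑ r ∈ Finset.range n, min r d = d * (d - 1) + 2 * ((n - d) * d) := by
    rw [Finset.range_eq_Ico, ← Finset.sum_Ico_consecutive _ (Nat.zero_le d) hdn]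
    rw [← Finset.range_eq_Ico]
    have h1 : ∑ r ∈ Finset.range d, min r d = ∑ r ∈ Finset.range d, r :=
      Finset.sum_congr rfl fun r hr =>
        min_eq_left (le_of_lt (Finset.mem_range.mp hr))
    have h2 : ∑ r ∈ Finset.Ico d n, min r d = (n - d) * d := by
      rw [Finset.sum_congr rfl fun r hr =>
        min_eq_right (Finset.mem_Ico.mp hr).1, Finset.sum_const, Nat.card_Ico]
      simp [Nat.smul_one_eq_cast]
    rw [h1, h2, Nat.mul_add, Nat.mul_comm 2, Finset.sum_range_id_mul_two]
  -- final arithmetic contradiction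
  have he2 : 2 * e ≤ d * (d - 1) + 2 * ((n - d) * d) := by
    omega
  have hM' : (M : ℤ) = (d : ℤ) + 2 := by
    have h2 : (2:ℕ) ≤ M := hM2
    omega
  have key : (2 * e : ℤ) ≤ (d : ℤ) * ((d:ℤ) - 1) + 2 * (((n:ℤ) - (d:ℤ)) * (d:ℤ)) := by
    rcases Nat.eq_zero_or_pos d with h1d | h1d
    · have he0 : e = 0 := by
        rw [h1d] at he2
        simp only [Nat.zero_sub, Nat.mul_zero, Nat.sub_zero, Nat.add_zero, Nat.mul_zero] at he2
        omega
      rw [he0, h1d]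
      norm_num
    · have hcast := (Nat.cast_le (α := ℤ)).mpr he2
      push_cast [Nat.cast_sub h1d, Nat.cast_sub hdn] at hcast
      linarith
  rw [hM'] at hgt
  have hring : ((d:ℤ)+2-1) + 2*((d:ℤ)+2-1)*n - ((d:ℤ)+2-1)^2 - 2*n
      = (d:ℤ)*((d:ℤ)-1) + 2*(((n:ℤ)-(d:ℤ))*(d:ℤ)) := by ring
  linarith
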